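/- Let n ≥ 1, let I ⊆ ℝ be an interval, let V_0,…,V_n : I → ℝ be differentiable on I, let δ_0,…,δ_n be nonzero real numbers, and suppose that w := Σ_{r=0}^n δ_r V_r vanishes nowhere on I. Set B_r := δ_r V_r / w for r = 0,…,n and V̄_r := (B_{r+1} + ⋯ + B_n)′ for r = 0,…,n−1. Then for all real numbers γ_0,…,γ_n, the identity ((Σ_{r=0}^n γ_r V_r)/w)′ = Σ_{r=0}^{n−1} (γ_{r+1}/δ_{r+1} − γ_r/δ_r) · V̄_r holds on I. -/

import Mathlib

open Set Fin.NatCast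

/-- Theorem: the coefficient recursion for generalised derivatives. With
`w = ∑ δᵣ Vᵣ` nonvanishing on the interval `I`, `Bᵣ = δᵣ Vᵣ / w` and
`V̄ᵣ = (B_{r+1} + ⋯ + B_n)'`, one has
`((∑ γᵣ Vᵣ)/w)' = ∑ᵣ (γ_{r+1}/δ_{r+1} − γᵣ/δᵣ) V̄ᵣ` on `I`. -/
theorem stmt19 (n : ℕ) (hn : 1 ≤ n) (I : Set ℝ)
    (hI : I.OrdConnected) (hI2 : I.Nontrivial)
    (V : Fin (n + 1) → ℝ → ℝ)
    (hV : ∀ i, ∀ x ∈ I, DifferentiableWithinAt ℝ (V i) I x)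
    (δ : Fin (n + 1) → ℝ) (hδ : ∀ i, δ i ≠ 0)
    (hw : ∀ x ∈ I, (∑ r, δ r * V r x) ≠ 0)
    (γ : Fin (n + 1) → ℝ) :
    ∀ x ∈ I,
      derivWithin (fun y => (∑ r, γ r * V r y) / ∑ r, δ r * V r y) I x
        = ∑ r : Fin n,
            (γ r.succ / δ r.succ - γ r.castSucc / δ r.castSucc) *
              derivWithin (fun y => ∑ j : Fin (n + 1),
                if (r : ℕ) < (j : ℕ)
                then δ j * V j y / ∑ s, δ s * V s y else 0) I x := by
  intro x hx
  -- uniqueness of derivatives within I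
  have hconv : Convex ℝ I := hI.convex
  have hint : (interior I).Nonempty := by
    obtain ⟨a, ha, b, hb, hab⟩ := hI2
    rcases hab.lt_or_gt with h | h
    · have hsub : Ioo a b ⊆ I := fun y hy => hI.out ha hb ⟨hy.1.le, hy.2.le⟩
      exact ⟨(a + b) / 2, interior_mono hsub
        (by rw [interior_Ioo]; exact ⟨by linarith, by linarith⟩)⟩
    · have hsub : Ioo b a ⊆ I := fun y hy => hI.out hb ha ⟨hy.1.le, hy.2.le⟩
      exact ⟨(b + a) / 2, interior_mono hsub
        (by rw [interior_Ioo]; exact ⟨by linarith, by linarith⟩)⟩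
  have hu : UniqueDiffWithinAt ℝ I x :=
    uniqueDiffWithinAt_convex hconv hint (subset_closure hx)
  -- differentiability of w
  have hwdiff : ∀ y ∈ I, DifferentiableWithinAt ℝ (fun z => ∑ r, δ r * V r z) I y := by
    intro y hy
    exact DifferentiableWithinAt.fun_sum fun i _ => (hV i y hy).const_mul _
  -- differentiability of each tail-sum function
  have hfdiff : ∀ (r : Fin n), ∀ y ∈ I, DifferentiableWithinAt ℝ
      (fun z => ∑ j : Fin (n + 1),
        if (r : ℕ) < (j : ℕ) then δ j * V j z / ∑ s, δ s * V s z else 0) I y := by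
    intro r y hy
    apply DifferentiableWithinAt.fun_sum
    intro j _
    by_cases h : (r : ℕ) < (j : ℕ)
    · simp only [h, if_true]
      exact ((hV j y hy).const_mul _).div (hwdiff y hy) (hw y hy)
    · simp only [h, if_false]
      exact differentiableWithinAt_const 0
  -- the key pointwise identity
  set c : ℕ → ℝ := fun m => γ (m : Fin (n + 1)) / δ (m : Fin (n + 1)) with hc
  have hcoef : ∀ r : Fin n,
      γ r.succ / δ r.succ - γ r.castSucc / δ r.castSucc = c ((r : ℕ) + 1) - c (r : ℕ) := by
    intro r
    have h1 : (((r : ℕ) + 1 : ℕ) : Fin (n + 1)) = r.succ := by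
      apply Fin.ext
      simp [Fin.val_natCast, Nat.mod_eq_of_lt (Nat.succ_lt_succ r.isLt)]
    have h2 : (((r : ℕ) : ℕ) : Fin (n + 1)) = r.castSucc := by
      apply Fin.ext
      simp [Fin.val_natCast, Nat.mod_eq_of_lt (Nat.lt_succ_of_lt r.isLt)]
    rw [hc]
    simp only [h1, h2]
  have htel : ∀ j : Fin (n + 1),
      (∑ r : Fin n, if (r : ℕ) < (j : ℕ) then c ((r : ℕ) + 1) - c (r : ℕ) else 0)
        = c (j : ℕ) - c 0 := by
    intro j
    rw [Fin.sum_univ_eq_sum_range (fun i => if i < (j : ℕ) then c (i + 1) - c i else 0)]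
    rw [← Finset.sum_filter]
    have hfil : (Finset.range n).filter (· < (j : ℕ)) = Finset.range (j : ℕ) := by
      ext i
      simp only [Finset.mem_filter, Finset.mem_range]
      have := j.isLt
      omega
    rw [hfil, Finset.sum_range_sub c]
  have key : ∀ y ∈ I,
      (∑ r, γ r * V r y) / (∑ r, δ r * V r y)
        = c 0 + ∑ r : Fin n, (γ r.succ / δ r.succ - γ r.castSucc / δ r.castSucc) *
            (∑ j : Fin (n + 1),
              if (r : ℕ) < (j : ℕ) then δ j * V j y / ∑ s, δ s * V s y else 0) := by
    intro y hy
    have hwy : (∑ s, δ s * V s y) ≠ 0 := hw y hy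
    have : ∑ r : Fin n, (γ r.succ / δ r.succ - γ r.castSucc / δ r.castSucc) *
            (∑ j : Fin (n + 1),
              if (r : ℕ) < (j : ℕ) then δ j * V j y / ∑ s, δ s * V s y else 0)
        = ∑ j : Fin (n + 1), (c (j : ℕ) - c 0) * (δ j * V j y / ∑ s, δ s * V s y) := by
      simp_rw [Finset.mul_sum, mul_ite, mul_zero]
      rw [Finset.sum_comm]
      refine Finset.sum_congr rfl fun j _ => ?_
      rw [← htel j, Finset.sum_mul]
      refine Finset.sum_congr rfl fun r _ => ?_
      rw [hcoef r]
      by_cases h : (r : ℕ) < (j : ℕ) <;> simp [h]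
    rw [this]
    have hsum1 : ∑ j : Fin (n + 1), δ j * V j y / (∑ s, δ s * V s y) = 1 := by
      rw [← Finset.sum_div, div_self hwy]
    have hsum2 : ∑ j : Fin (n + 1), c (j : ℕ) * (δ j * V j y / ∑ s, δ s * V s y)
        = (∑ r, γ r * V r y) / (∑ s, δ s * V s y) := by
      rw [Finset.sum_div]
      refine Finset.sum_congr rfl fun j _ => ?_
      rw [hc]
      simp only [Fin.cast_val_eq_self]
      have hδj := hδ j
      field_simp
    simp_rw [sub_mul]
    rw [Finset.sum_sub_distrib, hsum2, ← Finset.mul_sum, hsum1]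
    ring
  -- rewrite the derivative using the pointwise identity
  rw [derivWithin_congr key (key x hx)]
  rw [derivWithin_const_add _]
  rw [derivWithin_fun_sum (fun r _ => ((hfdiff r x hx).const_mul _))]
  refine Finset.sum_congr rfl fun r _ => ?_
  rw [derivWithin_const_mul _ (hfdiff r x hx)]
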